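/- arXiv:2202.02815 — 3 statements merged into one kernel-verified Lean document; each statement's English description precedes it below -/
import Mathlib

section
/- Let s ∈ ℝ^m and w, w' ∈ ℝ^m be vectors all of whose entries are strictly positive, and let k-iterate point w' play the role of w^(k). Then -log(sᵀw) ≤ -∑_{j=1}^m (s_j w'_j / (sᵀw')) · log((sᵀw' / w'_j) · w_j). -/
/-- Lemma 1: majorization of `-log(sᵀw)` at `w'` via Jensen's inequality. -/
theorem neg_log_inner_le_surrogate {m : ℕ} (s w w' : Fin m → ℝ)
    (hs : ∀ j, 0 < s j) (hw : ∀ j, 0 < w j) (hw' : ∀ j, 0 < w' j) :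
    -Real.log (∑ j, s j * w j) ≤
      -∑ j, (s j * w' j / ∑ i, s i * w' i) *
        Real.log ((∑ i, s i * w' i) / w' j * w j) := by
  rcases Nat.eq_zero_or_pos m with hm | hm
  · subst hm; simp
  set T := ∑ i, s i * w' i with hT
  have hTpos : 0 < T := Finset.sum_pos (fun i _ => mul_pos (hs i) (hw' i)) ⟨⟨0, hm⟩, Finset.mem_univ _⟩
  have key := (strictConcaveOn_log_Ioi.concaveOn).le_map_sum
    (t := Finset.univ) (w := fun j => s j * w' j / T)
    (p := fun j => T / w' j * w j)
    (fun j _ => le_of_lt (div_pos (mul_pos (hs j) (hw' j)) hTpos))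
    (by rw [← Finset.sum_div, ← hT]; field_simp)
    (fun j _ => Set.mem_Ioi.mpr (mul_pos (div_pos hTpos (hw' j)) (hw j)))
  have hsum : ∑ j, (s j * w' j / T) • (T / w' j * w j) = ∑ j, s j * w j := by
    apply Finset.sum_congr rfl
    intro j _
    have h1 : w' j ≠ 0 := (hw' j).ne'
    have h2 : T ≠ 0 := hTpos.ne'
    field_simp
    linear_combination (w j * s j * T * T⁻¹) * mul_inv_cancel₀ h1 + (w j * s j) * mul_inv_cancel₀ h2
  rw [hsum] at key
  simpa [smul_eq_mul] using neg_le_neg key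
end

section
/- Let d ∈ ℝ^m have nonnegative entries, let α > 0 and β > 0, and let s_1, …, s_p ∈ ℝ^m be vectors with strictly positive entries. Define f(w) = 2wᵀd - α∑_{i=1}^p log(s_iᵀw) + β‖w‖₂² and, for a point w' with strictly positive entries, define g(w | w') = 2wᵀd - α∑_{i=1}^p ∑_{j=1}^m (s_{i,j} w'_j / (s_iᵀw')) · log((s_iᵀw' / w'_j) · w_j) + β‖w‖₂². Then for every w ∈ ℝ^m with strictly positive entries, f(w) ≤ g(w | w'). -/
/-- The surrogate `g(· | w')` (eq. (12)) upper-bounds the objective `f` (eq. (6)). -/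
theorem objective_le_surrogate {m p : ℕ} (d : Fin m → ℝ) (hd : ∀ j, 0 ≤ d j)
    (α β : ℝ) (hα : 0 < α) (hβ : 0 < β)
    (s : Fin p → Fin m → ℝ) (hs : ∀ i j, 0 < s i j)
    (w w' : Fin m → ℝ) (hw : ∀ j, 0 < w j) (hw' : ∀ j, 0 < w' j) :
    2 * (∑ j, w j * d j) - α * ∑ i, Real.log (∑ j, s i j * w j)
        + β * ∑ j, (w j) ^ 2
      ≤ 2 * (∑ j, w j * d j)
        - α * ∑ i, ∑ j, (s i j * w' j / ∑ l, s i l * w' l) *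
            Real.log ((∑ l, s i l * w' l) / w' j * w j)
        + β * ∑ j, (w j) ^ 2 := by
  have key : ∀ i, ∑ j, (s i j * w' j / ∑ l, s i l * w' l) *
      Real.log ((∑ l, s i l * w' l) / w' j * w j) ≤ Real.log (∑ j, s i j * w j) := by
    intro i
    set S := ∑ l, s i l * w' l with hS
    rcases Nat.eq_zero_or_pos m with hm | hm
    · subst hm; simp
    have : NeZero m := ⟨hm.ne'⟩
    have hSpos : 0 < S := Finset.sum_pos (fun l _ => mul_pos (hs i l) (hw' l))
      Finset.univ_nonempty
    have h₀ : ∀ j ∈ Finset.univ, (0:ℝ) ≤ s i j * w' j / S :=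
      fun j _ => div_nonneg (mul_pos (hs i j) (hw' j)).le hSpos.le
    have h₁ : ∑ j, s i j * w' j / S = 1 := by
      rw [← Finset.sum_div, ← hS, div_self hSpos.ne']
    have hmem : ∀ j ∈ Finset.univ, S / w' j * w j ∈ Set.Ioi (0:ℝ) :=
      fun j _ => mul_pos (div_pos hSpos (hw' j)) (hw j)
    have := (strictConcaveOn_log_Ioi.concaveOn).le_map_sum h₀ h₁ hmem
    simp only [smul_eq_mul] at this
    refine this.trans_eq (congrArg Real.log ?_)
    refine Finset.sum_congr rfl fun j _ => ?_
    field_simp [hSpos.ne', (hw' j).ne']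
  have hsum : ∑ i, ∑ j, (s i j * w' j / ∑ l, s i l * w' l) *
      Real.log ((∑ l, s i l * w' l) / w' j * w j) ≤ ∑ i, Real.log (∑ j, s i j * w j) :=
    Finset.sum_le_sum fun i _ => key i
  have := mul_le_mul_of_nonneg_left hsum hα.le
  linarith
end

section
/- Let d ∈ ℝ^m have nonnegative entries, let α > 0 and β > 0, let s_1, …, s_p ∈ ℝ^m have entries in {0,1} with each column nonzero (for every j there exists i with s_{i,j} = 1), and let w ∈ ℝ^m have strictly positive entries. Define, for each j, c_j = α∑_{i=1}^p s_{i,j} w_j / (s_iᵀw) and the update w⁺_j = (-2d_j + √(4d_j² + 8βc_j)) / (4β). Then every entry of w⁺ is strictly positive and f(w⁺) ≤ f(w), where f(v) = 2vᵀd - α∑_{i=1}^p log(s_iᵀv) + β‖v‖₂². -/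
open Finset Real

lemma mm_aux {m p : ℕ} (d : Fin m → ℝ) (hd : ∀ j, 0 ≤ d j)
    (α β : ℝ) (hα : 0 < α) (hβ : 0 < β)
    (s : Fin p → Fin m → ℝ) (hs01 : ∀ i j, s i j = 0 ∨ s i j = 1)
    (hcol : ∀ j, ∃ i, s i j = 1)
    (w : Fin m → ℝ) (hw : ∀ j, 0 < w j)
    (c : Fin m → ℝ) (hc : ∀ j, c j = α * ∑ i, s i j * w j / ∑ l, s i l * w l)
    (t : Fin m → ℝ)
    (ht : ∀ j, t j = (-2 * d j + Real.sqrt (4 * (d j) ^ 2 + 8 * β * c j)) / (4 * β)) :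
    (∀ j, 0 < t j) ∧
    (2 * (∑ j, t j * d j) - α * ∑ i, Real.log (∑ j, s i j * t j) + β * ∑ j, (t j) ^ 2
      ≤ 2 * (∑ j, w j * d j) - α * ∑ i, Real.log (∑ j, s i j * w j)
        + β * ∑ j, (w j) ^ 2) := by
  have hs0 : ∀ i j, 0 ≤ s i j := by
    intro i j; rcases hs01 i j with h | h <;> rw [h] <;> norm_num
  have hS0 : ∀ i, 0 ≤ ∑ l, s i l * w l := by
    intro i; exact Finset.sum_nonneg fun l _ => mul_nonneg (hs0 i l) (hw l).le
  -- positivity of c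
  have hcpos : ∀ j, 0 < c j := by
    intro j
    rw [hc]
    apply mul_pos hα
    obtain ⟨i₀, hi₀⟩ := hcol j
    apply Finset.sum_pos'
    · intro i _
      exact div_nonneg (mul_nonneg (hs0 i j) (hw j).le) (hS0 i)
    · refine ⟨i₀, Finset.mem_univ _, ?_⟩
      apply div_pos (by rw [hi₀]; simpa using hw j)
      have : s i₀ j * w j ≤ ∑ l, s i₀ l * w l :=
        Finset.single_le_sum (fun l _ => mul_nonneg (hs0 i₀ l) (hw l).le) (Finset.mem_univ j)
      rw [hi₀, one_mul] at this
      linarith [hw j]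
  -- positivity of t and quadratic identity
  have hroot : ∀ j, 0 < t j ∧ 2 * β * (t j) ^ 2 + 2 * d j * t j = c j := by
    intro j
    have hnn : (0:ℝ) ≤ 4 * (d j) ^ 2 + 8 * β * c j := by
      nlinarith [sq_nonneg (d j), hcpos j]
    set r := Real.sqrt (4 * (d j) ^ 2 + 8 * β * c j) with hr
    have hr2 : r ^ 2 = 4 * (d j) ^ 2 + 8 * β * c j := Real.sq_sqrt hnn
    have hrgt : 2 * d j < r := by
      apply lt_of_pow_lt_pow_left₀ 2 (Real.sqrt_nonneg _)
      nlinarith [hcpos j]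
    have htj : t j = (-2 * d j + r) / (4 * β) := ht j
    constructor
    · rw [htj]; apply div_pos (by linarith) (by linarith)
    · rw [htj]
      field_simp
      nlinarith [hr2]
  have htpos : ∀ j, 0 < t j := fun j => (hroot j).1
  -- coordinatewise descent of surrogate
  have hcoord : ∀ j, 2 * d j * (t j - w j) + β * ((t j) ^ 2 - (w j) ^ 2)
      ≤ c j * (Real.log (t j) - Real.log (w j)) := by
    intro j
    have htj := htpos j
    have hwj := hw j
    have hlog : Real.log (w j) - Real.log (t j) ≤ w j / t j - 1 := by
      have h := Real.log_le_sub_one_of_pos (div_pos hwj htj)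
      rwa [Real.log_div hwj.ne' htj.ne'] at h
    have key : c j * (w j / t j - 1) = (2 * β * t j + 2 * d j) * (w j - t j) := by
      rw [← (hroot j).2]
      field_simp
    have h2 : c j * (Real.log (w j) - Real.log (t j)) ≤ (2 * β * t j + 2 * d j) * (w j - t j) := by
      rw [← key]
      exact mul_le_mul_of_nonneg_left hlog (hcpos j).le
    nlinarith [sq_nonneg (w j - t j)]
  -- Jensen per row
  have hrow : ∀ i, ∑ j, (s i j * w j / ∑ l, s i l * w l) * (Real.log (t j) - Real.log (w j))
      ≤ Real.log (∑ j, s i j * t j) - Real.log (∑ j, s i j * w j) := by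
    intro i
    set Si := ∑ l, s i l * w l with hSi
    rcases eq_or_lt_of_le (hS0 i) with hz | hpos
    · -- zero row
      have hall : ∀ j, s i j = 0 := by
        intro j
        have h0 : ∀ l ∈ Finset.univ, (0:ℝ) ≤ s i l * w l :=
          fun l _ => mul_nonneg (hs0 i l) (hw l).le
        have := (Finset.sum_eq_zero_iff_of_nonneg h0).1 hz.symm j (Finset.mem_univ j)
        rcases hs01 i j with h | h
        · exact h
        · exfalso; rw [h, one_mul] at this; exact (hw j).ne' this
      have hSiz : Si = 0 := hSi.trans hz.symm
      simp [hall, hSiz]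
    · -- positive row
      have hSine : Si ≠ 0 := hpos.ne'
      set lam : Fin m → ℝ := fun j => s i j * w j / Si with hlam
      have hlam0 : ∀ j ∈ Finset.univ, 0 ≤ lam j :=
        fun j _ => div_nonneg (mul_nonneg (hs0 i j) (hw j).le) hpos.le
      have hlam1 : ∑ j, lam j = 1 := by
        rw [hlam]
        rw [← Finset.sum_div]
        exact div_self hSine
      set x : Fin m → ℝ := fun j => t j * Si / w j with hx
      have hxpos : ∀ j, 0 < x j := fun j => div_pos (mul_pos (htpos j) hpos) (hw j)
      have jensen := (strictConcaveOn_log_Ioi.concaveOn).le_map_sum hlam0 hlam1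
        (fun j _ => Set.mem_Ioi.2 (hxpos j)) (p := x)
      simp only [smul_eq_mul] at jensen
      have hxsum : ∑ j, lam j * x j = ∑ j, s i j * t j := by
        apply Finset.sum_congr rfl
        intro j _
        rw [hlam, hx]
        field_simp
        rw [div_eq_iff (hw j).ne']
        ring
      have hlogx : ∀ j, lam j * Real.log (x j)
          = lam j * (Real.log (t j) - Real.log (w j)) + lam j * Real.log Si := by
        intro j
        rw [hx]
        rw [Real.log_div (mul_pos (htpos j) hpos).ne' (hw j).ne',
          Real.log_mul (htpos j).ne' hSine]
        ring
      have hsumlogx : ∑ j, lam j * Real.log (x j)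
          = (∑ j, lam j * (Real.log (t j) - Real.log (w j))) + Real.log Si := by
        calc ∑ j, lam j * Real.log (x j)
            = ∑ j, (lam j * (Real.log (t j) - Real.log (w j)) + lam j * Real.log Si) :=
              Finset.sum_congr rfl (fun j _ => hlogx j)
          _ = (∑ j, lam j * (Real.log (t j) - Real.log (w j)))
              + (∑ j, lam j) * Real.log Si := by
              rw [Finset.sum_add_distrib, Finset.sum_mul]
          _ = _ := by rw [hlam1, one_mul]
      rw [hsumlogx, hxsum] at jensen
      have : ∑ j, lam j * (Real.log (t j) - Real.log (w j))
          ≤ Real.log (∑ j, s i j * t j) - Real.log Si := by linarith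
      simpa [hlam] using this
  -- assemble
  have hsum1 : ∑ j, (2 * d j * (t j - w j) + β * ((t j) ^ 2 - (w j) ^ 2))
      ≤ ∑ j, c j * (Real.log (t j) - Real.log (w j)) :=
    Finset.sum_le_sum (fun j _ => hcoord j)
  have hswap : ∑ j, c j * (Real.log (t j) - Real.log (w j))
      = α * ∑ i, ∑ j, (s i j * w j / ∑ l, s i l * w l) * (Real.log (t j) - Real.log (w j)) := by
    calc ∑ j, c j * (Real.log (t j) - Real.log (w j))
        = ∑ j, α * ∑ i, (s i j * w j / ∑ l, s i l * w l) * (Real.log (t j) - Real.log (w j)) := by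
          apply Finset.sum_congr rfl
          intro j _
          rw [hc, mul_assoc, Finset.sum_mul]
      _ = α * ∑ j, ∑ i, (s i j * w j / ∑ l, s i l * w l) * (Real.log (t j) - Real.log (w j)) := by
          rw [Finset.mul_sum]
      _ = _ := by rw [Finset.sum_comm]
  have hsum2 : α * ∑ i, ∑ j, (s i j * w j / ∑ l, s i l * w l) * (Real.log (t j) - Real.log (w j))
      ≤ α * ∑ i, (Real.log (∑ j, s i j * t j) - Real.log (∑ j, s i j * w j)) :=
    mul_le_mul_of_nonneg_left (Finset.sum_le_sum (fun i _ => hrow i)) hα.le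
  have e1 : ∑ j, (2 * d j * (t j - w j) + β * ((t j) ^ 2 - (w j) ^ 2))
      = (2 * (∑ j, t j * d j) + β * ∑ j, (t j) ^ 2)
        - (2 * (∑ j, w j * d j) + β * ∑ j, (w j) ^ 2) := by
    have ea : ∑ j, 2 * d j * (t j - w j) = 2 * (∑ j, t j * d j) - 2 * (∑ j, w j * d j) := by
      rw [Finset.mul_sum, Finset.mul_sum, ← Finset.sum_sub_distrib]
      exact Finset.sum_congr rfl fun j _ => by ring
    have eb : ∑ j, β * ((t j) ^ 2 - (w j) ^ 2)
        = β * (∑ j, (t j) ^ 2) - β * (∑ j, (w j) ^ 2) := by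
      rw [Finset.mul_sum, Finset.mul_sum, ← Finset.sum_sub_distrib]
      exact Finset.sum_congr rfl fun j _ => by ring
    rw [Finset.sum_add_distrib, ea, eb]
    ring
  have e2 : α * ∑ i, (Real.log (∑ j, s i j * t j) - Real.log (∑ j, s i j * w j))
      = α * ∑ i, Real.log (∑ j, s i j * t j) - α * ∑ i, Real.log (∑ j, s i j * w j) := by
    rw [Finset.sum_sub_distrib, mul_sub]
  refine ⟨htpos, ?_⟩
  rw [e1] at hsum1
  rw [e2] at hsum2
  linarith [hswap ▸ hsum1]

/-- Per-iteration descent guarantee of the MM algorithm: the closed-form update (19)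
keeps the weights strictly positive and does not increase the objective (6). -/
theorem mm_update_descent {m p : ℕ} (d : Fin m → ℝ) (hd : ∀ j, 0 ≤ d j)
    (α β : ℝ) (hα : 0 < α) (hβ : 0 < β)
    (s : Fin p → Fin m → ℝ) (hs01 : ∀ i j, s i j = 0 ∨ s i j = 1)
    (hcol : ∀ j, ∃ i, s i j = 1)
    (w : Fin m → ℝ) (hw : ∀ j, 0 < w j) :
    (∀ j, 0 < (-2 * d j + Real.sqrt (4 * (d j) ^ 2
        + 8 * β * (α * ∑ i, s i j * w j / ∑ l, s i l * w l))) / (4 * β)) ∧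
    (2 * (∑ j, ((-2 * d j + Real.sqrt (4 * (d j) ^ 2
            + 8 * β * (α * ∑ i, s i j * w j / ∑ l, s i l * w l))) / (4 * β)) * d j)
        - α * ∑ i, Real.log (∑ j, s i j *
            ((-2 * d j + Real.sqrt (4 * (d j) ^ 2
              + 8 * β * (α * ∑ i', s i' j * w j / ∑ l, s i' l * w l))) / (4 * β)))
        + β * ∑ j, ((-2 * d j + Real.sqrt (4 * (d j) ^ 2
            + 8 * β * (α * ∑ i, s i j * w j / ∑ l, s i l * w l))) / (4 * β)) ^ 2
      ≤ 2 * (∑ j, w j * d j) - α * ∑ i, Real.log (∑ j, s i j * w j)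
        + β * ∑ j, (w j) ^ 2) := by
  exact mm_aux d hd α β hα hβ s hs01 hcol w hw
    (fun j => α * ∑ i, s i j * w j / ∑ l, s i l * w l) (fun j => rfl)
    (fun j => (-2 * d j + Real.sqrt (4 * (d j) ^ 2
      + 8 * β * (α * ∑ i, s i j * w j / ∑ l, s i l * w l))) / (4 * β)) (fun j => rfl)
end
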